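/- Let T = (U, A₀) be an arborescence with root r, B a cardinal basis of the network matrix of (D,T) such that T_B = (U, A_B) is a directed tree, and let (v,v') be an arc of D (so the T-path from v to v' is directed, hence v ≥_T v'). Then the unique T_B-path from v to v' contains at least one forward arc. -/

import Mathlib

open SimpleGraph

variable {U : Type*}

/-- The underlying simple graph of a set of arcs. -/
def arcGraph [DecidableEq U] (A : Finset (U × U)) : SimpleGraph U where
  Adj u v := u ≠ v ∧ ((u, v) ∈ A ∨ (v, u) ∈ A)
  symm := ⟨fun _ _ h => ⟨h.1.symm, h.2.symm⟩⟩
  loopless := ⟨fun _ h => h.1 rfl⟩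

/-- `A` is a directed tree on `U`: its underlying undirected graph is a (spanning) tree,
and arcs are loopless and not doubled. -/
def IsDirTree [DecidableEq U] (A : Finset (U × U)) : Prop :=
  (arcGraph A).IsTree ∧ ∀ p ∈ A, p.1 ≠ p.2 ∧ Prod.swap p ∉ A

/-- The list of (oriented) arcs traversed by a walk. -/
def dartProds [DecidableEq U] {A : Finset (U × U)} {u v : U}
    (p : (arcGraph A).Walk u v) : List (U × U) :=
  p.darts.map SimpleGraph.Dart.toProd

/-- `M` is the network matrix of the digraph with arc set `Arcs` w.r.t. the directed
tree with arc set `A₀`: the entry `(f, a)` is `1`/`-1`/`0` according as the tree arc `f`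
is forward/backward/absent on the unique tree path between the endpoints of `a`. -/
def IsNetworkMatrix [DecidableEq U] (A₀ Arcs : Finset (U × U))
    (M : (U × U) → (U × U) → ℝ) : Prop :=
  ∀ f ∈ A₀, ∀ a ∈ Arcs, ∀ p : (arcGraph A₀).Walk a.1 a.2, p.IsPath →
    M f a = if f ∈ dartProds p then 1 else if Prod.swap f ∈ dartProds p then -1 else 0

/-- The directed-step relation of an arc set. -/
def stepRel (A : Finset (U × U)) : U → U → Prop := fun a b => (a, b) ∈ A


section AuxForward

variable [Fintype U] [DecidableEq U]

/-- From a directed reachability we get a walk all of whose darts are forward. -/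
private lemma walk_of_rtg {A₀ : Finset (U × U)} (hl : ∀ p ∈ A₀, p.1 ≠ p.2)
    {x y : U} (h : Relation.ReflTransGen (stepRel A₀) x y) :
    ∃ w : (arcGraph A₀).Walk x y, ∀ d ∈ w.darts, d.toProd ∈ A₀ := by
  induction h with
  | refl => exact ⟨.nil, by simp⟩
  | tail hstep hmem ih =>
      obtain ⟨w, hw⟩ := ih
      have hadj : (arcGraph A₀).Adj _ _ := ⟨hl _ hmem, Or.inl hmem⟩
      refine ⟨w.concat hadj, ?_⟩
      intro d hd
      rw [SimpleGraph.Walk.darts_concat, List.concat_eq_append, List.mem_append] at hd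
      rcases hd with hd | hd
      · exact hw d hd
      · simp only [List.mem_singleton] at hd
        subst hd
        exact hmem

/-- Antisymmetry of directed reachability in a directed tree. -/
private lemma rtg_antisymm {A₀ : Finset (U × U)} (htree : IsDirTree A₀)
    {x y : U} (hxy : Relation.ReflTransGen (stepRel A₀) x y)
    (hyx : Relation.ReflTransGen (stepRel A₀) y x) : x = y := by
  by_contra hne
  have hl : ∀ p ∈ A₀, p.1 ≠ p.2 := fun p hp => (htree.2 p hp).1
  obtain ⟨w1, hw1⟩ := walk_of_rtg hl hxy
  obtain ⟨w2, hw2⟩ := walk_of_rtg hl hyx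
  -- the reverse of w2 is a walk from x to y whose darts are all backward
  have hw2r : ∀ d ∈ w2.reverse.darts, Prod.swap d.toProd ∈ A₀ := by
    intro d hd
    rw [SimpleGraph.Walk.darts_reverse, List.mem_reverse, List.mem_map] at hd
    obtain ⟨e, he, rfl⟩ := hd
    simpa using hw2 e he
  -- bypass to paths; they are equal by acyclicity
  have hpe : (⟨w1.bypass, w1.bypass_isPath⟩ : (arcGraph A₀).Path x y)
      = ⟨w2.reverse.bypass, w2.reverse.bypass_isPath⟩ :=
    SimpleGraph.isAcyclic_iff_path_unique.mp htree.1.IsAcyclic _ _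
  have heq : w1.bypass = w2.reverse.bypass := congrArg Subtype.val hpe
  -- the path is nonempty since x ≠ y, so it has a dart
  cases hcase : w1.bypass with
  | nil => exact hne rfl
  | cons hadj q =>
      set d : (arcGraph A₀).Dart := ⟨(_, _), hadj⟩ with hd
      have hd1 : d ∈ w1.bypass.darts := by rw [hcase]; simp [d]
      have hfor : d.toProd ∈ A₀ := hw1 d (w1.darts_bypass_subset hd1)
      have hd2 : d ∈ w2.reverse.darts := w2.reverse.darts_bypass_subset (heq ▸ hd1)
      have hback : Prod.swap d.toProd ∈ A₀ := hw2r d hd2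
      exact (htree.2 _ hfor).2 hback

open Classical in
/-- Number of ancestors of `u` in the arborescence order. -/
private noncomputable def rnk (A₀ : Finset (U × U)) (u : U) : ℕ :=
  (Finset.univ.filter (fun w => Relation.ReflTransGen (stepRel A₀) w u)).card

open Classical in
private lemma rnk_mono {A₀ : Finset (U × U)} {a b : U}
    (h : Relation.ReflTransGen (stepRel A₀) a b) : rnk A₀ a ≤ rnk A₀ b := by
  apply Finset.card_le_card
  intro w hw
  simp only [Finset.mem_filter, Finset.mem_univ, true_and] at hw ⊢
  exact hw.trans h

open Classical in
private lemma rnk_strict {A₀ : Finset (U × U)} (htree : IsDirTree A₀) {a b : U}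
    (h : stepRel A₀ a b) : rnk A₀ a < rnk A₀ b := by
  apply Finset.card_lt_card
  constructor
  · intro w hw
    simp only [Finset.mem_filter, Finset.mem_univ, true_and] at hw ⊢
    exact hw.trans (Relation.ReflTransGen.single h)
  · intro hsub
    have hb : b ∈ Finset.univ.filter (fun w => Relation.ReflTransGen (stepRel A₀) w b) := by
      simp [Relation.ReflTransGen.refl]
    have hba : Relation.ReflTransGen (stepRel A₀) b a := by
      simpa using hsub hb
    exact (htree.2 (a, b) h).1
      (rtg_antisymm htree (Relation.ReflTransGen.single h) hba)

private lemma rnk_strict_trans {A₀ : Finset (U × U)} (htree : IsDirTree A₀) {a b : U}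
    (h : Relation.TransGen (stepRel A₀) a b) : rnk A₀ a < rnk A₀ b := by
  induction h with
  | single h => exact rnk_strict htree h
  | tail _ h ih => exact ih.trans (rnk_strict htree h)

end AuxForward

/-- Let `T = (U, A₀)` be an arborescence rooted at `r`, let every arc of `D` span a
`T`-directed path, and let `B ⊆ Arcs` be a cardinal basis whose arc set forms a
directed tree `T_B`.  If `(v,v')` is an arc of `D` (spanning a nonempty directed
`T`-path), then the unique `T_B`-path from `v` to `v'` contains at least one forward
arc (a dart traversed in the orientation of an arc of `B`). -/
theorem path_contains_forward_arc [Fintype U] [DecidableEq U]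
    (A₀ Arcs : Finset (U × U)) (r : U)
    (htree : IsDirTree A₀)
    (hroot : ∀ v : U, Relation.ReflTransGen (stepRel A₀) r v)
    (hspan : ∀ a ∈ Arcs, Relation.ReflTransGen (stepRel A₀) a.1 a.2)
    (B : Finset (U × U)) (hBsub : B ⊆ Arcs) (hBtree : IsDirTree B)
    (v v' : U) (hvt : (v, v') ∈ Arcs)
    (hdir : Relation.TransGen (stepRel A₀) v v') :
    ∀ p : (arcGraph B).Walk v v', p.IsPath →
      ∃ d ∈ p.darts, SimpleGraph.Dart.toProd d ∈ B := by
  intro p _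
  by_contra hno
  push_neg at hno
  -- every dart of p is backward, hence rank is monotone decreasing along p
  have key : ∀ {a b : U} (q : (arcGraph B).Walk a b),
      (∀ d ∈ q.darts, SimpleGraph.Dart.toProd d ∉ B) → rnk A₀ b ≤ rnk A₀ a := by
    intro a b q
    induction q with
    | nil => intro _; exact le_refl _
    | cons hadj q ih =>
        intro hq
        rename_i u w x
        have hd : (SimpleGraph.Dart.mk (u, w) hadj) ∈ (SimpleGraph.Walk.cons hadj q).darts := by
          simp
        have hnotf := hq _ hd
        have hback : (w, u) ∈ B := by
          rcases hadj.2 with h | h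
          · exact absurd h hnotf
          · exact h
        have h1 : Relation.ReflTransGen (stepRel A₀) w u := hspan (w, u) (hBsub hback)
        have h2 : rnk A₀ x ≤ rnk A₀ w := by
          apply ih
          intro d hdm
          exact hq d (by simp [hdm])
        exact h2.trans (rnk_mono h1)
  have h1 : rnk A₀ v' ≤ rnk A₀ v := key p hno
  have h2 : rnk A₀ v < rnk A₀ v' := rnk_strict_trans htree hdir
  omega
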